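/- Let G be a group whose abelianization has positive rank (Hom(G,ℤ) ≠ 0) and suppose G = G₁ * G₂ is a nontrivial free product with Hom(Gᵢ,ℤ) ≠ 0 for i = 1,2. Then G has no finite-index subgroup with nontrivial center. -/

import Mathlib

open Monoid Monoid.CoprodI Monoid.CoprodI.Word

section CoprodILemmas

variable {ι : Type*} [DecidableEq ι] {G : ι → Type*} [∀ i, Group (G i)]
  [∀ i, DecidableEq (G i)]

lemma myEquivPair_cons_same {i : ι} (m : G i) (w : Word G) (h1 : w.fstIdx ≠ some i)
    (h2 : m ≠ 1) : equivPair i (cons m w h1 h2) = ⟨m, w, h1⟩ := by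
  rw [(equivPair i).apply_eq_iff_eq_symm_apply, equivPair_symm]
  simp [rcons, h2]

lemma myRcons_length {i : ι} (p : Pair G i) :
    (rcons p).toList.length ≤ p.tail.toList.length + 1 := by
  rw [rcons]
  split_ifs <;> simp [cons]

lemma myEquivPair_tail_length (i : ι) (w : Word G) :
    (equivPair i w).tail.toList.length ≤ w.toList.length := by
  induction w using consRecOn with
  | empty =>
    rw [equivPair_eq_of_fstIdx_ne (by simp [fstIdx, empty])]
  | cons j m u h1 h2 ih =>
    by_cases hij : i = j
    · subst hij
      rw [myEquivPair_cons_same m u h1 h2]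
      simp [cons]
    · rw [equivPair_eq_of_fstIdx_ne (by simp [fstIdx_cons, Ne.symm hij])]

lemma myEquivPair_tail_length_eq {i : ι} {w : Word G} (h : w.fstIdx = some i) :
    (equivPair i w).tail.toList.length + 1 = w.toList.length := by
  induction w using consRecOn with
  | empty => simp [fstIdx, empty] at h
  | cons j m u h1 h2 ih =>
    have hij : i = j := by simpa [fstIdx_cons] using h.symm
    subst hij
    rw [myEquivPair_cons_same m u h1 h2]
    simp [cons]

lemma mySmul_length {i : ι} (m : G i) (w : Word G) :
    (of m • w).toList.length ≤ w.toList.length + 1 := by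
  rw [of_smul_def]
  refine le_trans (myRcons_length _) ?_
  exact Nat.succ_le_succ (myEquivPair_tail_length i w)

lemma mySmul_length_of_fstIdx_eq {i : ι} (m : G i) {w : Word G} (h : w.fstIdx = some i) :
    (of m • w).toList.length ≤ w.toList.length := by
  rw [of_smul_def]
  refine le_trans (myRcons_length _) ?_
  exact le_of_eq (myEquivPair_tail_length_eq h)

lemma myEquiv_apply (x : CoprodI G) : equiv x = x • empty := rfl

lemma myEquiv_mul (x y : CoprodI G) : equiv (x * y) = x • equiv y := by
  rw [myEquiv_apply, myEquiv_apply, mul_smul]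

lemma myEquiv_prod (w : Word G) : equiv (prod w) = w :=
  Word.equiv.apply_symm_apply w

lemma myEquiv_of {i : ι} (c : G i) (hc : c ≠ 1) :
    (equiv ((of c : CoprodI G))).toList = [⟨i, c⟩] := by
  have h1 : (empty : Word G).fstIdx ≠ some i := by simp [fstIdx, empty]
  have : equiv ((of c : CoprodI G)) = cons c empty h1 hc := by
    rw [cons_eq_smul, myEquiv_apply]
  rw [this]
  simp [cons]

/-- Key length/shape lemma: multiplying a reduced word on the right by a nontrivial letter
either does not increase the length, or appends the letter. -/
lemma myMul_of_length (w : Word G) {i : ι} (c : G i) (hc : c ≠ 1) :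
    (equiv (prod w * of c)).toList.length ≤ w.toList.length ∨
      (equiv (prod w * of c)).toList = w.toList ++ [⟨i, c⟩] := by
  induction w using consRecOn with
  | empty =>
    right
    rw [prod_empty, one_mul, myEquiv_of c hc]
    rfl
  | cons j m u h1 h2 ih =>
    have hprod : prod (cons m u h1 h2) * of c = of m * (prod u * of c) := by
      rw [prod_cons, mul_assoc]
    rw [hprod, myEquiv_mul]
    rcases ih with ih | ih
    · left
      calc (of m • equiv (prod u * of c)).toList.length
          ≤ (equiv (prod u * of c)).toList.length + 1 := mySmul_length _ _
        _ ≤ u.toList.length + 1 := by omega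
        _ = (cons m u h1 h2).toList.length := by simp [cons]
    · by_cases hfst : (equiv (prod u * of c)).fstIdx = some j
      · left
        calc (of m • equiv (prod u * of c)).toList.length
            ≤ (equiv (prod u * of c)).toList.length := mySmul_length_of_fstIdx_eq _ hfst
          _ = u.toList.length + 1 := by rw [ih]; simp
          _ = (cons m u h1 h2).toList.length := by simp [cons]
      · right
        rw [← cons_eq_smul (h1 := hfst) (h2 := h2)]
        simp [cons, ih]

lemma myEq_empty_of_comm (w : Word G) {i : ι} (c c' : G i) (hc : c ≠ 1)
    (hfst : w.fstIdx ≠ some i) (hcomm : prod w * of c = of c' * prod w) : w = empty := by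
  have hc' : c' ≠ 1 := by
    rintro rfl
    rw [map_one, one_mul] at hcomm
    have h1 : of c = (1 : CoprodI G) := by
      apply mul_left_cancel (a := prod w)
      rw [mul_one]
      exact hcomm
    exact hc (of_injective i (by rw [h1, map_one]))
  have h2 : equiv (of c' * prod w) = cons c' w hfst hc' := by
    rw [myEquiv_mul, myEquiv_prod, cons_eq_smul]
  have h1 := myMul_of_length w c hc
  rw [hcomm, h2] at h1
  rcases hl : w.toList with _ | ⟨l₀, rest⟩
  · rcases w with ⟨wl, _, _⟩
    cases hl
    rfl
  · exfalso
    rcases h1 with h1 | h1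
    · simp [cons, hl] at h1
    · rw [hl] at h1
      simp only [cons, List.cons_append] at h1
      have hhead : (⟨i, c'⟩ : Σ i, G i) = l₀ := (List.cons.injEq _ _ _ _).mp h1 |>.1
      apply hfst
      rw [fstIdx, hl, ← hhead]
      rfl

lemma myMem_range_of_comm (x : CoprodI G) {i : ι} (c c' : G i) (hc : c ≠ 1)
    (hcomm : x * of c = of c' * x) : ∃ d : G i, x = of d := by
  set p := equivPair i (equiv x) with hp
  have hx : x = of p.head * prod p.tail := by
    conv_lhs => rw [← Word.equiv.symm_apply_apply x]
    show prod (equiv x) = _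
    conv_lhs => rw [← (equivPair i).symm_apply_apply (equiv x), equivPair_symm, prod_rcons]
  have hcomm' : prod p.tail * of c = of (p.head⁻¹ * c' * p.head) * prod p.tail := by
    apply mul_left_cancel (a := of p.head)
    rw [← mul_assoc, ← hx, hcomm, hx, map_mul, map_mul, map_inv]
    group
  have ht := myEq_empty_of_comm p.tail c _ hc p.fstIdx_ne hcomm'
  refine ⟨p.head, ?_⟩
  rw [hx, ht, prod_empty, mul_one]

lemma myKey {i j : ι} (hij : i ≠ j) (z : CoprodI G) (hz : z ≠ 1)
    (c : G i) (hc : c ≠ 1) (d : G j) (hd : d ≠ 1)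
    (h1 : z * of c = of c * z) (h2 : z * of d = of d * z) : False := by
  obtain ⟨u, rfl⟩ := myMem_range_of_comm z c c hc h1
  obtain ⟨v, hv⟩ := myMem_range_of_comm (of u) d d hd h2
  have hu : u = 1 := by
    have h := congrArg (lift (Pi.mulSingle i (MonoidHom.id (G i)))) hv
    rw [lift_of, lift_of, Pi.mulSingle_eq_same, Pi.mulSingle_eq_of_ne (Ne.symm hij)] at h
    simpa using h
  exact hz (by rw [hu, map_one])

end CoprodILemmas

section CoprodTransfer

universe u v

variable {G₁ : Type u} {G₂ : Type v} [Group G₁] [Group G₂]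

lemma myCoprodKey (z : Monoid.Coprod G₁ G₂) (hz : z ≠ 1)
    (a : G₁) (ha : a ≠ 1) (b : G₂) (hb : b ≠ 1)
    (h1 : z * Monoid.Coprod.inl a = Monoid.Coprod.inl a * z)
    (h2 : z * Monoid.Coprod.inr b = Monoid.Coprod.inr b * z) : False := by
  classical
  letI F : Bool → Type (max u v) := fun b => cond b (ULift.{v} G₁) (ULift.{u} G₂)
  letI : ∀ b, Group (F b) := fun b =>
    Bool.rec ((inferInstance : Group (ULift.{u} G₂))) ((inferInstance : Group (ULift.{v} G₁))) b
  letI : ∀ b, DecidableEq (F b) := fun b => Classical.decEq _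
  let e : Monoid.Coprod G₁ G₂ →* CoprodI F :=
    Monoid.Coprod.lift
      ((CoprodI.of (M := F) (i := true)).comp (MulEquiv.ulift.symm.toMonoidHom))
      ((CoprodI.of (M := F) (i := false)).comp (MulEquiv.ulift.symm.toMonoidHom))
  let e' : CoprodI F →* Monoid.Coprod G₁ G₂ :=
    CoprodI.lift (fun b => match b with
      | true => Monoid.Coprod.inl.comp (MulEquiv.ulift.toMonoidHom)
      | false => Monoid.Coprod.inr.comp (MulEquiv.ulift.toMonoidHom))
  have he'e : ∀ x, e' (e x) = x := by
    have : e'.comp e = MonoidHom.id _ := by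
      apply Monoid.Coprod.hom_ext
      · ext x
        simp only [MonoidHom.comp_apply, MonoidHom.id_apply, MonoidHom.coe_comp,
          Function.comp_apply, e, e']
        rw [Monoid.Coprod.lift_apply_inl, MonoidHom.comp_apply, CoprodI.lift_of]
        exact congrArg Monoid.Coprod.inl (MulEquiv.apply_symm_apply MulEquiv.ulift.{u, v} x)
      · ext x
        simp only [MonoidHom.comp_apply, MonoidHom.id_apply, MonoidHom.coe_comp,
          Function.comp_apply, e, e']
        rw [Monoid.Coprod.lift_apply_inr, MonoidHom.comp_apply, CoprodI.lift_of]
        exact congrArg Monoid.Coprod.inr (MulEquiv.apply_symm_apply MulEquiv.ulift.{v, u} x)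
    intro x
    exact DFunLike.congr_fun this x
  have hz' : e z ≠ 1 := fun h => hz (by rw [← he'e z, h, map_one])
  have h1' : e z * CoprodI.of (M := F) (i := true) (ULift.up a)
      = CoprodI.of (M := F) (i := true) (ULift.up a) * e z := by
    have h := congrArg e h1
    simp only [map_mul, Monoid.Coprod.lift_apply_inl, MonoidHom.comp_apply, e] at h
    exact h
  have h2' : e z * CoprodI.of (M := F) (i := false) (ULift.up b)
      = CoprodI.of (M := F) (i := false) (ULift.up b) * e z := by
    have h := congrArg e h2
    simp only [map_mul, Monoid.Coprod.lift_apply_inr, MonoidHom.comp_apply, e] at h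
    exact h
  have ha' : (ULift.up a : F true) ≠ 1 := fun h => ha (congrArg ULift.down h)
  have hb' : (ULift.up b : F false) ≠ 1 := fun h => hb (congrArg ULift.down h)
  have htf : (true : Bool) ≠ false := by simp
  exact @myKey Bool instDecidableEqBool F _ _ true false htf (e z) hz'
    (ULift.up a) ha' (ULift.up b) hb' h1' h2'

end CoprodTransfer

lemma myPowNeOne {G : Type*} [Group G] (φ : G →* Multiplicative ℤ) {a : G}
    (ha : φ a ≠ 1) {n : ℕ} (hn : n ≠ 0) : a ^ n ≠ 1 := by
  intro h
  apply ha
  have h2 : (φ a) ^ n = 1 := by rw [← map_pow, h, map_one]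
  have h3 := congrArg Multiplicative.toAdd h2
  rw [toAdd_pow] at h3
  have : Multiplicative.toAdd (φ a) = 0 := by
    rcases mul_eq_zero.mp (by rwa [nsmul_eq_mul] at h3) with h | h
    · exact absurd (Nat.cast_injective h) hn
    · exact h
  have : φ a = Multiplicative.ofAdd 0 := by
    rw [← this]; rfl
  simpa using this

/-- A nontrivial free product `G = G₁ ∗ G₂`, whose factors each admit a nonzero
homomorphism to `ℤ` (so that `Hom(G, ℤ) ≠ 0` as well), has no finite-index subgroup
with nontrivial center. -/
theorem stmt18 {G₁ G₂ : Type*} [Group G₁] [Group G₂]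
    [Nontrivial G₁] [Nontrivial G₂]
    (φ₁ : G₁ →* Multiplicative ℤ) (hφ₁ : φ₁ ≠ 1)
    (φ₂ : G₂ →* Multiplicative ℤ) (hφ₂ : φ₂ ≠ 1)
    (φ : Monoid.Coprod G₁ G₂ →* Multiplicative ℤ) (hφ : φ ≠ 1) :
    ¬ ∃ H : Subgroup (Monoid.Coprod G₁ G₂), H.FiniteIndex ∧
        ∃ z : H, z ∈ Subgroup.center H ∧ z ≠ 1 := by
  rintro ⟨H, hHfi, z, hzc, hz1⟩
  obtain ⟨a, ha⟩ : ∃ a, φ₁ a ≠ 1 := by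
    by_contra h
    push_neg at h
    exact hφ₁ (DFunLike.ext _ _ fun a => (h a).trans rfl)
  obtain ⟨b, hb⟩ : ∃ b, φ₂ b ≠ 1 := by
    by_contra h
    push_neg at h
    exact hφ₂ (DFunLike.ext _ _ fun a => (h a).trans rfl)
  set zv : Monoid.Coprod G₁ G₂ := (z : Monoid.Coprod G₁ G₂) with hzv
  have hzvne : zv ≠ 1 := fun h => hz1 (Subtype.ext h)
  set C := Subgroup.centralizer {zv} with hC
  have hHC : H ≤ C := by
    intro g hg
    rw [Subgroup.mem_centralizer_iff]
    rintro m hm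
    rw [Set.mem_singleton_iff] at hm
    subst hm
    have := (Subgroup.mem_center_iff.mp hzc) ⟨g, hg⟩
    exact (congrArg Subtype.val this).symm
  haveI := hHfi
  haveI : C.FiniteIndex := Subgroup.finiteIndex_of_le hHC
  obtain ⟨n, hn, -, hna⟩ :=
    Subgroup.exists_pow_mem_of_index_ne_zero (H := C) Subgroup.FiniteIndex.index_ne_zero
      (Monoid.Coprod.inl a)
  obtain ⟨m, hm, -, hmb⟩ :=
    Subgroup.exists_pow_mem_of_index_ne_zero (H := C) Subgroup.FiniteIndex.index_ne_zero
      (Monoid.Coprod.inr b)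
  rw [Subgroup.mem_centralizer_iff] at hna hmb
  have h1 : zv * Monoid.Coprod.inl (a ^ n) = Monoid.Coprod.inl (a ^ n) * zv := by
    have := hna zv (Set.mem_singleton _)
    rwa [map_pow]
  have h2 : zv * Monoid.Coprod.inr (b ^ m) = Monoid.Coprod.inr (b ^ m) * zv := by
    have := hmb zv (Set.mem_singleton _)
    rwa [map_pow]
  exact myCoprodKey zv hzvne (a ^ n) (myPowNeOne φ₁ ha (by omega)) (b ^ m)
    (myPowNeOne φ₂ hb (by omega)) h1 h2
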